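/- Let H ∈ 𝔄 be reflection invariant and globally gauge invariant with positive semidefinite coupling matrix J = (J_{𝔍𝔍'})_{𝔍,𝔍'∈𝒫₊}. If A ∈ 𝔄₊ has expansion A = Σ_{𝔍∈𝒫₊} a_𝔍·C_𝔍, then Tr((Θ(A)∘A)·e^{−H}) ≥ |a_∅|², where a_∅ is the coefficient of the identity in A. -/

import Mathlib

open ComplexOrder

noncomputable section

/-- The setting of the paper: a finite set `Λ` with a fixed-point free involution `ϑ`
exchanging `Λp` and its complement, the Clifford algebra (algebra of Majoranas) `carrier`
with self-adjoint generators `c i`, the global gauge automorphism `gauge`, the antilinear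
reflection `*`-automorphism `Θ`, a square root `ζ` of `-1`, the twisted product `twist`,
a choice `P` of orderings of the subsets of `Λp` (giving the bases
`{C J : J ∈ P}` of `𝔄₊` and `{Θ(C J) ∘ C J' : J, J' ∈ P}` of `𝔄`),
and the tracial state `Tr` picking out the coefficient of `1` in the basis expansion. -/
structure MajoranaSetting where
  Λ : Type
  [fintypeΛ : Fintype Λ]
  [deceqΛ : DecidableEq Λ]
  ϑ : Λ → Λ
  ϑ_invol : Function.Involutive ϑ
  ϑ_fixfree : ∀ i, ϑ i ≠ i
  Λp : Finset Λ
  ϑ_exch : ∀ i, i ∈ Λp ↔ ϑ i ∉ Λp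
  carrier : Type
  [nring : NormedRing carrier]
  [nalg : NormedAlgebra ℂ carrier]
  [cmpl : CompleteSpace carrier]
  [starring : StarRing carrier]
  [starmod : StarModule ℂ carrier]
  c : Λ → carrier
  c_star : ∀ i, star (c i) = c i
  clifford : ∀ i j, c i * c j + c j * c i = if i = j then (2 : carrier) else 0
  gauge : carrier ≃ₐ[ℂ] carrier
  gauge_c : ∀ i, gauge (c i) = - c i
  Θ : carrier → carrier
  Θ_add : ∀ x y, Θ (x + y) = Θ x + Θ y
  Θ_smul : ∀ (z : ℂ) (x), Θ (z • x) = (starRingEnd ℂ z) • Θ x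
  Θ_mul : ∀ x y, Θ (x * y) = Θ x * Θ y
  Θ_star : ∀ x, Θ (star x) = star (Θ x)
  Θ_invol : ∀ x, Θ (Θ x) = x
  Θ_c : ∀ i, Θ (c i) = c (ϑ i)
  ζ : ℂ
  ζ_sq : ζ ^ 2 = -1
  twist : carrier → carrier → carrier
  twist_add_left : ∀ x x' y, twist (x + x') y = twist x y + twist x' y
  twist_add_right : ∀ x y y', twist x (y + y') = twist x y + twist x y'
  twist_smul_left : ∀ (z : ℂ) (x y), twist (z • x) y = z • twist x y
  twist_smul_right : ∀ (z : ℂ) (x y), twist x (z • y) = z • twist x y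
  twist_spec : ∀ (Am Ap Bm Bp : carrier) (a b a' b' : ℕ),
    a ≤ 1 → b ≤ 1 → a' ≤ 1 → b' ≤ 1 →
    Am ∈ Algebra.adjoin ℂ (c '' {i | i ∉ Λp}) →
    Ap ∈ Algebra.adjoin ℂ (c '' {i | i ∈ Λp}) →
    Bm ∈ Algebra.adjoin ℂ (c '' {i | i ∉ Λp}) →
    Bp ∈ Algebra.adjoin ℂ (c '' {i | i ∈ Λp}) →
    gauge Am = ((-1 : ℂ) ^ a) • Am →
    gauge Ap = ((-1 : ℂ) ^ b) • Ap →
    gauge Bm = ((-1 : ℂ) ^ a') • Bm →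
    gauge Bp = ((-1 : ℂ) ^ b') • Bp →
    twist (Am * Ap) (Bm * Bp)
      = ζ ^ ((a * b' : ℤ) - (b * a' : ℤ)) • (Am * Ap * (Bm * Bp))
  P : Finset (List Λ)
  P_nodup : ∀ J ∈ P, J.Nodup
  P_sub : ∀ J ∈ P, ∀ i ∈ J, i ∈ Λp
  P_unique : ∀ s : Finset Λ, s ⊆ Λp → ∃! J, J ∈ P ∧ J.toFinset = s
  Tr : carrier →ₗ[ℂ] ℂ
  Tr_basis : ∀ J ∈ P, ∀ J' ∈ P,
    Tr (twist (Θ ((J.map c).prod)) ((J'.map c).prod))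
      = if J = [] ∧ J' = [] then 1 else 0
  basis_indep : LinearIndependent ℂ
    (fun p : {J // J ∈ P} × {J // J ∈ P} =>
      twist (Θ ((p.1.1.map c).prod)) ((p.2.1.map c).prod))
  basis_span : ∀ x : carrier, x ∈ Submodule.span ℂ
    (Set.range fun p : {J // J ∈ P} × {J // J ∈ P} =>
      twist (Θ ((p.1.1.map c).prod)) ((p.2.1.map c).prod))
  plus_span : ∀ x ∈ Algebra.adjoin ℂ (c '' {i | i ∈ Λp}),
    x ∈ Submodule.span ℂ (Set.range fun J : {J // J ∈ P} => ((J.1.map c).prod))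

attribute [instance] MajoranaSetting.fintypeΛ MajoranaSetting.deceqΛ
  MajoranaSetting.nring MajoranaSetting.nalg MajoranaSetting.cmpl
  MajoranaSetting.starring MajoranaSetting.starmod

namespace MajoranaSetting

variable (S : MajoranaSetting)

/-- The subalgebra `𝔄₊` generated by the Majoranas on the `+` side. -/
def Aplus : Subalgebra ℂ S.carrier := Algebra.adjoin ℂ (S.c '' {i | i ∈ S.Λp})

/-- The subalgebra `𝔄₋` generated by the Majoranas on the `-` side. -/
def Aminus : Subalgebra ℂ S.carrier := Algebra.adjoin ℂ (S.c '' {i | i ∉ S.Λp})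

/-- The monomial `C_𝔍 = c_{i₁} ⋯ c_{i_k}`. -/
def C (J : List S.Λ) : S.carrier := (J.map S.c).prod

/-- `q_𝔍 = (-1)^{k(k-1)/2}`. -/
def q (J : List S.Λ) : ℂ := (-1 : ℂ) ^ (J.length * (J.length - 1) / 2)

/-- `s_𝔍 = ζ^{k(k-1)/2}`. -/
def sgn (J : List S.Λ) : ℂ := S.ζ ^ (J.length * (J.length - 1) / 2)

/-- The exponential `e^x` in the (finite-dimensional) algebra `𝔄`. -/
def expm (x : S.carrier) : S.carrier := NormedSpace.exp x

/-- The Hamiltonian `H = -∑_{𝔍,𝔍' ∈ 𝒫₊} J_{𝔍𝔍'} Θ(C_𝔍) ∘ C_𝔍'`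
determined by coupling constants `Jc`. -/
def Ham (Jc : List S.Λ → List S.Λ → ℂ) : S.carrier :=
  - ∑ J ∈ S.P, ∑ J' ∈ S.P, Jc J J' • S.twist (S.Θ (S.C J)) (S.C J')

/-- The index type of the basis `{C J : J ∈ 𝒫₊}`. -/
abbrev PIdx := {J : List S.Λ // J ∈ S.P}

/-- The index type `𝒫₊ - {∅}` of couplings across the reflection plane. -/
abbrev PIdx0 := {p : S.PIdx // p.1 ≠ []}

/-- The full matrix of coupling constants. -/
def Jmat (Jc : List S.Λ → List S.Λ → ℂ) : Matrix S.PIdx S.PIdx ℂ :=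
  Matrix.of fun p q => Jc p.1 q.1

/-- The matrix `J⁰` of coupling constants across the reflection plane. -/
def Jmat0 (Jc : List S.Λ → List S.Λ → ℂ) : Matrix S.PIdx0 S.PIdx0 ℂ :=
  Matrix.of fun p q => Jc p.1.1 q.1.1

end MajoranaSetting



-- ============ auxiliary development (part A) ============
namespace MajoranaSetting
variable (S : MajoranaSetting)

@[simp] lemma C_nil : S.C [] = 1 := rfl

lemma C_cons (i : S.Λ) (J : List S.Λ) : S.C (i :: J) = S.c i * S.C J := by
  simp [C]

lemma c_sq (i : S.Λ) : S.c i * S.c i = 1 := by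
  have h := S.clifford i i
  rw [if_pos rfl] at h
  have h2 : (2:ℂ) • (S.c i * S.c i) = (2:ℂ) • (1 : S.carrier) := by
    rw [two_smul, two_smul, h]; norm_num
  have := congrArg (fun z => (2:ℂ)⁻¹ • z) h2
  simpa [smul_smul] using this

lemma c_anticomm {i j : S.Λ} (h : i ≠ j) : S.c i * S.c j = -(S.c j * S.c i) := by
  have hc := S.clifford i j
  rw [if_neg h] at hc
  exact eq_neg_of_add_eq_zero_left hc

lemma theta_one : S.Θ 1 = 1 := by
  have h : ∀ y : S.carrier, y * S.Θ 1 = y := by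
    intro y
    have : S.Θ (S.Θ y * 1) = S.Θ (S.Θ y) := by rw [mul_one]
    rw [S.Θ_mul, S.Θ_invol] at this
    exact this
  have := h 1
  rwa [one_mul] at this

end MajoranaSetting

namespace MajoranaSetting
variable (S : MajoranaSetting)

lemma gauge_C (L : List S.Λ) : S.gauge (S.C L) = ((-1 : ℂ) ^ L.length) • S.C L := by
  induction L with
  | nil => simp [C]
  | cons i L ih =>
      rw [C_cons, map_mul, S.gauge_c, ih, List.length_cons, pow_succ]
      rw [neg_mul, mul_smul_comm, mul_neg_one, neg_smul]

lemma theta_C (L : List S.Λ) : S.Θ (S.C L) = S.C (L.map S.ϑ) := by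
  induction L with
  | nil => simpa [C] using S.theta_one
  | cons i L ih => rw [C_cons, S.Θ_mul, ih, S.Θ_c, List.map_cons, C_cons]

lemma mem_plus (L : List S.Λ) (h : ∀ i ∈ L, i ∈ S.Λp) :
    S.C L ∈ Algebra.adjoin ℂ (S.c '' {i | i ∈ S.Λp}) := by
  induction L with
  | nil => exact one_mem _
  | cons i L ih =>
      rw [C_cons]
      exact mul_mem (Algebra.subset_adjoin ⟨i, h i (by simp), rfl⟩)
        (ih fun j hj => h j (List.mem_cons_of_mem _ hj))

lemma mem_minus (L : List S.Λ) (h : ∀ i ∈ L, i ∉ S.Λp) :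
    S.C L ∈ Algebra.adjoin ℂ (S.c '' {i | i ∉ S.Λp}) := by
  induction L with
  | nil => exact one_mem _
  | cons i L ih =>
      rw [C_cons]
      exact mul_mem (Algebra.subset_adjoin ⟨i, h i (by simp), rfl⟩)
        (ih fun j hj => h j (List.mem_cons_of_mem _ hj))

lemma c_comm_C (i : S.Λ) (M : List S.Λ) (h : ∀ j ∈ M, i ≠ j) :
    S.c i * S.C M = ((-1 : ℂ) ^ M.length) • (S.C M * S.c i) := by
  induction M with
  | nil => simp [C]
  | cons j M ih =>
      rw [C_cons]
      have hne : i ≠ j := h j (by simp)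
      calc S.c i * (S.c j * S.C M) = (S.c i * S.c j) * S.C M := by rw [mul_assoc]
        _ = (-(S.c j * S.c i)) * S.C M := by rw [S.c_anticomm hne]
        _ = -(S.c j * (S.c i * S.C M)) := by rw [neg_mul, mul_assoc]
        _ = -(S.c j * (((-1 : ℂ) ^ M.length) • (S.C M * S.c i))) := by
              rw [ih (fun j hj => h j (List.mem_cons_of_mem _ hj))]
        _ = ((-1 : ℂ) ^ (j :: M).length) • (S.c j * S.C M * S.c i) := by
              rw [mul_smul_comm, List.length_cons, pow_succ, mul_assoc]
              rw [← neg_smul]; ring_nf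
  
lemma C_comm_C (L M : List S.Λ) (h : ∀ i ∈ L, ∀ j ∈ M, i ≠ j) :
    S.C L * S.C M = ((-1 : ℂ) ^ (L.length * M.length)) • (S.C M * S.C L) := by
  induction L with
  | nil => simp [C]
  | cons i L ih =>
      rw [C_cons, mul_assoc, ih (fun i hi => h i (List.mem_cons_of_mem _ hi))]
      rw [mul_smul_comm, ← mul_assoc, S.c_comm_C i M (h i (by simp))]
      rw [smul_mul_assoc, smul_smul, List.length_cons, mul_assoc]
      rw [← pow_add]
      congr 2
      ring

lemma perm_sign {L M : List S.Λ} (h : L.Perm M) :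
    ∃ ε : ℂ, (ε = 1 ∨ ε = -1) ∧ S.C L = ε • S.C M := by
  induction h with
  | nil => exact ⟨1, Or.inl rfl, by simp⟩
  | cons x _ ih =>
      obtain ⟨ε, hε, hC⟩ := ih
      exact ⟨ε, hε, by rw [C_cons, hC, C_cons, mul_smul_comm]⟩
  | swap x y l =>
      by_cases hxy : x = y
      · subst hxy; exact ⟨1, Or.inl rfl, by simp⟩
      · refine ⟨-1, Or.inr rfl, ?_⟩
        rw [C_cons, C_cons, C_cons, C_cons, ← mul_assoc, ← mul_assoc]
        rw [S.c_anticomm (Ne.symm hxy)]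
        simp
  | trans _ _ ih1 ih2 =>
      obtain ⟨ε1, hε1, hC1⟩ := ih1
      obtain ⟨ε2, hε2, hC2⟩ := ih2
      refine ⟨ε1 * ε2, ?_, by rw [hC1, hC2, smul_smul]⟩
      rcases hε1 with h1 | h1 <;> rcases hε2 with h2 | h2 <;> simp [h1, h2]

lemma reduce (M : List S.Λ) :
    ∃ (ε : ℂ) (L : List S.Λ), (ε = 1 ∨ ε = -1) ∧ L.Nodup ∧
      (∀ x, x ∈ L ↔ Odd (M.count x)) ∧ (∀ x ∈ L, x ∈ M) ∧ S.C M = ε • S.C L := by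
  induction M with
  | nil => exact ⟨1, [], Or.inl rfl, List.nodup_nil, by simp, by simp, by simp⟩
  | cons i M ih =>
      obtain ⟨ε, L, hε, hnd, hmem, hsub, hC⟩ := ih
      by_cases hi : i ∈ L
      · obtain ⟨ε', hε', hC'⟩ := S.perm_sign (List.perm_cons_erase hi)
        refine ⟨ε * ε', L.erase i, ?_, hnd.erase i, ?_, ?_, ?_⟩
        · rcases hε with h1 | h1 <;> rcases hε' with h2 | h2 <;> simp [h1, h2]
        · intro x
          rcases eq_or_ne x i with rfl | hx
          · have hodd : Odd (M.count x) := (hmem x).mp hi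
            have h1 : x ∉ L.erase x := fun hmm =>
              ((List.Nodup.mem_erase_iff hnd).mp hmm).1 rfl
            rw [List.count_cons_self]
            rw [Nat.odd_add_one]
            simp [h1, hodd]
          · rw [List.Nodup.mem_erase_iff hnd]
            rw [List.count_cons_of_ne hx.symm, hmem x]
            exact ⟨fun h => h.2, fun h => ⟨hx, h⟩⟩
        · intro x hx
          exact List.mem_cons_of_mem _ (hsub x (List.mem_of_mem_erase hx))
        · rw [C_cons, hC, hC', C_cons]
          rw [mul_smul_comm, mul_smul_comm, ← mul_assoc, S.c_sq, one_mul, smul_smul]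
      · refine ⟨ε, i :: L, hε, List.nodup_cons.mpr ⟨hi, hnd⟩, ?_, ?_, ?_⟩
        · intro x
          rcases eq_or_ne x i with rfl | hx
          · have heven : ¬ Odd (M.count x) := fun h => hi ((hmem x).mpr h)
            rw [List.count_cons_self]
            rw [Nat.odd_add_one]
            simp [Nat.not_odd_iff_even.mp heven]
          · rw [List.count_cons_of_ne hx.symm, List.mem_cons, hmem x]
            simp [hx]
        · intro x hx
          rcases List.mem_cons.mp hx with h | h
          · exact h ▸ List.mem_cons_self (a := i) (l := M)
          · exact List.mem_cons_of_mem _ (hsub x h)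
        · rw [C_cons, hC, mul_smul_comm, C_cons]

end MajoranaSetting

namespace MajoranaSetting
variable (S : MajoranaSetting)

lemma nil_mem_P : [] ∈ S.P := by
  obtain ⟨J, ⟨hJ, hfin⟩, _⟩ := S.P_unique ∅ (Finset.empty_subset _)
  rwa [(List.toFinset_eq_empty_iff J).mp hfin] at hJ

def nilIdx : S.PIdx := ⟨[], S.nil_mem_P⟩

lemma toFinset_sub_Λp (p : S.PIdx) : p.1.toFinset ⊆ S.Λp := by
  intro x hx
  exact S.P_sub p.1 p.2 x (List.mem_toFinset.mp hx)

lemma eq_of_toFinset_eq (p r : S.PIdx) (h : p.1.toFinset = r.1.toFinset) : p = r := by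
  obtain ⟨J, _, huniq⟩ := S.P_unique p.1.toFinset (S.toFinset_sub_Λp p)
  have h1 := huniq p.1 ⟨p.2, rfl⟩
  have h2 := huniq r.1 ⟨r.2, h.symm⟩
  exact Subtype.ext (h1.trans h2.symm)

lemma C_append (J K : List S.Λ) : S.C (J ++ K) = S.C J * S.C K := by
  simp [C]

lemma mul_data (p r : S.PIdx) : ∃ (ε : ℂ) (L : S.PIdx), (ε = 1 ∨ ε = -1) ∧
    L.1.toFinset = symmDiff p.1.toFinset r.1.toFinset ∧
    S.C p.1 * S.C r.1 = ε • S.C L.1 := by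
  obtain ⟨ε₀, L₀, hε₀, hnd₀, hmem₀, hsub₀, hC₀⟩ := S.reduce (p.1 ++ r.1)
  have hpnd := S.P_nodup p.1 p.2
  have hrnd := S.P_nodup r.1 r.2
  have hset : L₀.toFinset = symmDiff p.1.toFinset r.1.toFinset := by
    ext x
    rw [List.mem_toFinset, hmem₀ x, Finset.mem_symmDiff]
    rw [List.count_append]
    by_cases hxp : x ∈ p.1 <;> by_cases hxr : x ∈ r.1 <;>
      simp [List.count_eq_one_of_mem, List.count_eq_zero_of_not_mem, hxp, hxr,
        hpnd, hrnd, List.mem_toFinset,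
        List.count_eq_one_of_mem hpnd, List.count_eq_zero_of_not_mem]
  have hsubΛ : L₀.toFinset ⊆ S.Λp := by
    intro x hx
    rcases List.mem_append.mp (hsub₀ x (List.mem_toFinset.mp hx)) with h | h
    · exact S.P_sub p.1 p.2 x h
    · exact S.P_sub r.1 r.2 x h
  obtain ⟨J, ⟨hJP, hJfin⟩, _⟩ := S.P_unique L₀.toFinset hsubΛ
  have hperm : L₀.Perm J :=
    List.perm_of_nodup_nodup_toFinset_eq hnd₀ (S.P_nodup J hJP) hJfin.symm
  obtain ⟨ε', hε', hC'⟩ := S.perm_sign hperm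
  refine ⟨ε₀ * ε', ⟨J, hJP⟩, ?_, by rw [hJfin, hset], ?_⟩
  · rcases hε₀ with h1 | h1 <;> rcases hε' with h2 | h2 <;> simp [h1, h2]
  · rw [← C_append, hC₀, hC', smul_smul]

def mulSign (p r : S.PIdx) : ℂ := (S.mul_data p r).choose
def mulIdx (p r : S.PIdx) : S.PIdx := (S.mul_data p r).choose_spec.choose

lemma mulSign_pm (p r : S.PIdx) : S.mulSign p r = 1 ∨ S.mulSign p r = -1 :=
  (S.mul_data p r).choose_spec.choose_spec.1

lemma mulIdx_toFinset (p r : S.PIdx) :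
    (S.mulIdx p r).1.toFinset = symmDiff p.1.toFinset r.1.toFinset :=
  (S.mul_data p r).choose_spec.choose_spec.2.1

lemma mul_eq (p r : S.PIdx) :
    S.C p.1 * S.C r.1 = S.mulSign p r • S.C (S.mulIdx p r).1 :=
  (S.mul_data p r).choose_spec.choose_spec.2.2

lemma len_toFinset (p : S.PIdx) : p.1.toFinset.card = p.1.length :=
  List.toFinset_card_of_nodup (S.P_nodup p.1 p.2)

lemma mulIdx_len (p r : S.PIdx) :
    (S.mulIdx p r).1.length % 2 = (p.1.length + r.1.length) % 2 := by
  have h := S.mulIdx_toFinset p r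
  have hL := S.len_toFinset (S.mulIdx p r)
  have hp := S.len_toFinset p
  have hr := S.len_toFinset r
  rw [h] at hL
  have hcard : (symmDiff p.1.toFinset r.1.toFinset).card
      = (p.1.toFinset \ r.1.toFinset).card + (r.1.toFinset \ p.1.toFinset).card := by
    rw [symmDiff_def]
    exact Finset.card_union_of_disjoint disjoint_sdiff_sdiff
  have h1 := Finset.card_inter_add_card_sdiff p.1.toFinset r.1.toFinset
  have h2 := Finset.card_inter_add_card_sdiff r.1.toFinset p.1.toFinset
  have hic : (p.1.toFinset ∩ r.1.toFinset).card = (r.1.toFinset ∩ p.1.toFinset).card := by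
    rw [Finset.inter_comm]
  omega

lemma mulIdx_self (p : S.PIdx) : S.mulIdx p p = S.nilIdx := by
  apply S.eq_of_toFinset_eq
  rw [S.mulIdx_toFinset, symmDiff_self]
  rfl

lemma mulIdx_ne (p r : S.PIdx) (h : p ≠ r) : S.mulIdx p r ≠ S.nilIdx := by
  intro hc
  apply h
  apply S.eq_of_toFinset_eq
  have := S.mulIdx_toFinset p r
  rw [hc] at this
  have h0 : (⊥ : Finset S.Λ) = symmDiff p.1.toFinset r.1.toFinset := this
  exact symmDiff_eq_bot.mp h0.symm

end MajoranaSetting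

namespace MajoranaSetting
variable (S : MajoranaSetting)

def e (p q : S.PIdx) : S.carrier := S.twist (S.Θ (S.C p.1)) (S.C q.1)

def bit (p : S.PIdx) : ℕ := p.1.length % 2

lemma bit_le_one (p : S.PIdx) : S.bit p ≤ 1 := Nat.lt_succ_iff.mp (Nat.mod_lt _ (by norm_num))

lemma zeta4 : S.ζ ^ 4 = 1 := by
  have : S.ζ ^ 4 = (S.ζ ^ 2) ^ 2 := by ring
  rw [this, S.ζ_sq]; ring

lemma zeta_two_mul (n : ℕ) : S.ζ ^ (2 * n) = (-1 : ℂ) ^ n := by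
  rw [pow_mul, S.ζ_sq]

end MajoranaSetting
lemma neg_one_pow_mod (n : ℕ) : ((-1 : ℂ)) ^ (n % 2) = (-1 : ℂ) ^ n := by
  conv_rhs => rw [← Nat.div_add_mod n 2, pow_add, pow_mul]
  norm_num
namespace MajoranaSetting
variable (S : MajoranaSetting)

lemma theta_smul_real {z : ℂ} (hz : z = 1 ∨ z = -1) (x : S.carrier) :
    S.Θ (z • x) = z • S.Θ x := by
  rw [S.Θ_smul]
  rcases hz with h | h <;> simp [h]

lemma gauge_C_bit (L : List S.Λ) :
    S.gauge (S.C L) = ((-1 : ℂ) ^ (L.length % 2)) • S.C L := by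
  rw [S.gauge_C, neg_one_pow_mod]

lemma theta_C_mem (p : S.PIdx) :
    S.Θ (S.C p.1) ∈ Algebra.adjoin ℂ (S.c '' {i | i ∉ S.Λp}) := by
  rw [S.theta_C]
  apply S.mem_minus
  intro j hj
  obtain ⟨i, hi, rfl⟩ := List.mem_map.mp hj
  exact (S.ϑ_exch i).mp (S.P_sub p.1 p.2 i hi)

lemma C_mem_plus (p : S.PIdx) :
    S.C p.1 ∈ Algebra.adjoin ℂ (S.c '' {i | i ∈ S.Λp}) :=
  S.mem_plus p.1 (S.P_sub p.1 p.2)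

lemma gauge_theta_C (p : S.PIdx) :
    S.gauge (S.Θ (S.C p.1)) = ((-1 : ℂ) ^ (S.bit p)) • S.Θ (S.C p.1) := by
  rw [S.theta_C, S.gauge_C_bit, List.length_map]
  rfl

lemma gauge_C_p (p : S.PIdx) :
    S.gauge (S.C p.1) = ((-1 : ℂ) ^ (S.bit p)) • S.C p.1 := S.gauge_C_bit p.1

lemma e_eq (p q : S.PIdx) :
    S.e p q = S.ζ ^ (S.bit p * S.bit q) • (S.Θ (S.C p.1) * S.C q.1) := by
  have hts := S.twist_spec (S.Θ (S.C p.1)) 1 1 (S.C q.1) (S.bit p) 0 0 (S.bit q)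
    (S.bit_le_one p) (Nat.zero_le 1) (Nat.zero_le 1) (S.bit_le_one q)
    (S.theta_C_mem p) (one_mem _) (one_mem _) (S.C_mem_plus q)
    (S.gauge_theta_C p) (by simp) (by simp) (S.gauge_C_p q)
  simp only [mul_one, one_mul] at hts
  show S.twist (S.Θ (S.C p.1)) (S.C q.1) = _
  rw [hts]
  congr 1

lemma inv_e (p q : S.PIdx) :
    S.Θ (S.C p.1) * S.C q.1 = S.ζ ^ (3 * (S.bit p * S.bit q)) • S.e p q := by
  rw [e_eq, smul_smul, ← pow_add]
  have : 3 * (S.bit p * S.bit q) + S.bit p * S.bit q = 4 * (S.bit p * S.bit q) := by ring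
  rw [this, pow_mul, S.zeta4, one_pow, one_smul]

lemma disj_pm (q r : S.PIdx) : ∀ i ∈ q.1, ∀ j ∈ (r.1.map S.ϑ), i ≠ j := by
  intro i hi j hj
  obtain ⟨k, hk, rfl⟩ := List.mem_map.mp hj
  intro heq
  exact (S.ϑ_exch k).mp (S.P_sub r.1 r.2 k hk) (heq ▸ S.P_sub q.1 q.2 i hi)

lemma core_mul (p q r s : S.PIdx) :
    (S.Θ (S.C p.1) * S.C q.1) * (S.Θ (S.C r.1) * S.C s.1)
      = ((-1 : ℂ) ^ (q.1.length * r.1.length) * (S.mulSign p r * S.mulSign q s)) •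
        (S.Θ (S.C (S.mulIdx p r).1) * S.C (S.mulIdx q s).1) := by
  set X1 := S.Θ (S.C p.1)
  set X2 := S.C q.1
  set X3 := S.Θ (S.C r.1)
  set X4 := S.C s.1
  have h23 : X2 * X3 = ((-1 : ℂ) ^ (q.1.length * r.1.length)) • (X3 * X2) := by
    show X2 * X3 = _
    rw [show X3 = S.C (r.1.map S.ϑ) from S.theta_C r.1]
    rw [S.C_comm_C q.1 (r.1.map S.ϑ) (S.disj_pm q r), List.length_map]
  have h13 : X1 * X3 = S.mulSign p r • S.Θ (S.C (S.mulIdx p r).1) := by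
    rw [show X1 * X3 = S.Θ (S.C p.1 * S.C r.1) from (S.Θ_mul _ _).symm]
    rw [S.mul_eq p r, S.theta_smul_real (S.mulSign_pm p r)]
  have h24 : X2 * X4 = S.mulSign q s • S.C (S.mulIdx q s).1 := S.mul_eq q s
  calc (X1 * X2) * (X3 * X4) = X1 * ((X2 * X3) * X4) := by
        rw [mul_assoc, ← mul_assoc X2 X3 X4]
    _ = ((-1 : ℂ) ^ (q.1.length * r.1.length)) • ((X1 * X3) * (X2 * X4)) := by
        rw [h23, smul_mul_assoc, mul_smul_comm]
        congr 1
        simp only [mul_assoc]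
    _ = _ := by
        rw [h13, h24, smul_mul_smul]
        rw [smul_smul]

def zphase (p q r s : S.PIdx) : ℂ :=
  S.ζ ^ (S.bit p * S.bit q + S.bit r * S.bit s + 2 * (q.1.length * r.1.length)
    + 3 * (S.bit (S.mulIdx p r) * S.bit (S.mulIdx q s)))

lemma e_mul (p q r s : S.PIdx) :
    S.e p q * S.e r s = (S.zphase p q r s * (S.mulSign p r * S.mulSign q s)) •
      S.e (S.mulIdx p r) (S.mulIdx q s) := by
  rw [S.e_eq p q, S.e_eq r s, smul_mul_smul, S.core_mul p q r s, S.inv_e]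
  rw [smul_smul, smul_smul]
  congr 1
  rw [zphase]
  rw [pow_add, pow_add, pow_add, S.zeta_two_mul]
  ring

end MajoranaSetting

namespace MajoranaSetting
variable (S : MajoranaSetting)

lemma zeta_pow_mod4 {n : ℕ} (h : n % 4 = 0) : S.ζ ^ n = 1 := by
  conv_lhs => rw [← Nat.div_add_mod n 4, h, Nat.add_zero, pow_mul, S.zeta4, one_pow]

lemma bit_mulIdx (p r : S.PIdx) : S.bit (S.mulIdx p r) = (S.bit p + S.bit r) % 2 := by
  unfold bit
  rw [S.mulIdx_len]
  omega

lemma bit_eq_zero_or_one (p : S.PIdx) : S.bit p = 0 ∨ S.bit p = 1 := by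
  have := S.bit_le_one p
  omega

lemma zphase_diag (p q : S.PIdx) : S.zphase p q p q = 1 := by
  unfold zphase
  rw [S.mulIdx_self p, S.mulIdx_self q]
  apply S.zeta_pow_mod4
  have hA : (q.1.length * p.1.length) % 2 = (S.bit p * S.bit q) % 2 := by
    rw [Nat.mul_mod]
    conv_rhs => rw [Nat.mul_mod]
    rw [show q.1.length % 2 = S.bit q from rfl, show p.1.length % 2 = S.bit p from rfl]
    rw [show S.bit q % 2 = S.bit q from Nat.mod_eq_of_lt (by have := S.bit_le_one q; omega)]
    rw [show S.bit p % 2 = S.bit p from Nat.mod_eq_of_lt (by have := S.bit_le_one p; omega)]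
    rw [Nat.mul_comm]
  have hb : S.bit S.nilIdx = 0 := rfl
  rw [hb]
  rcases S.bit_eq_zero_or_one p with hx | hx <;> rcases S.bit_eq_zero_or_one q with hy | hy <;>
    (rw [hx, hy]; rw [hx, hy] at hA; omega)

lemma zphase_even (p q r s : S.PIdx) (hpq : S.bit p = S.bit q) (hrs : S.bit r = S.bit s) :
    S.zphase p q r s = 1 := by
  unfold zphase
  rw [S.bit_mulIdx, S.bit_mulIdx, ← hpq, ← hrs]
  apply S.zeta_pow_mod4
  have hA : (q.1.length * r.1.length) % 2 = (S.bit p * S.bit r) % 2 := by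
    rw [Nat.mul_mod]
    conv_rhs => rw [Nat.mul_mod]
    rw [show q.1.length % 2 = S.bit q from rfl, show r.1.length % 2 = S.bit r from rfl]
    rw [← hpq]
    rw [show S.bit p % 2 = S.bit p from Nat.mod_eq_of_lt (by have := S.bit_le_one p; omega)]
    rw [show S.bit r % 2 = S.bit r from Nat.mod_eq_of_lt (by have := S.bit_le_one r; omega)]
  rcases S.bit_eq_zero_or_one p with hx | hx <;> rcases S.bit_eq_zero_or_one r with hy | hy <;>
    (rw [hx, hy]; rw [hx, hy] at hA; omega)

lemma Tr_e (p q : S.PIdx) :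
    S.Tr (S.e p q) = if p = S.nilIdx ∧ q = S.nilIdx then 1 else 0 := by
  have h := S.Tr_basis p.1 p.2 q.1 q.2
  have he : S.Tr (S.e p q) = if p.1 = [] ∧ q.1 = [] then 1 else 0 := h
  rw [he]
  have hiff : (p.1 = [] ∧ q.1 = []) ↔ (p = S.nilIdx ∧ q = S.nilIdx) := by
    constructor
    · rintro ⟨h1, h2⟩; exact ⟨Subtype.ext h1, Subtype.ext h2⟩
    · rintro ⟨rfl, rfl⟩; exact ⟨rfl, rfl⟩
  by_cases hc : p = S.nilIdx ∧ q = S.nilIdx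
  · rw [if_pos (hiff.mpr hc), if_pos hc]
  · rw [if_neg (fun hh => hc (hiff.mp hh)), if_neg hc]

lemma Tr_e_mul (p q r s : S.PIdx) :
    S.Tr (S.e p q * S.e r s)
      = if r = p ∧ s = q then S.mulSign p p * S.mulSign q q else 0 := by
  rw [S.e_mul, map_smul, S.Tr_e]
  by_cases h : r = p ∧ s = q
  · obtain ⟨rfl, rfl⟩ := h
    rw [if_pos ⟨S.mulIdx_self r, S.mulIdx_self s⟩, if_pos ⟨rfl, rfl⟩]
    rw [S.zphase_diag]
    simp
  · rw [if_neg h]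
    rw [if_neg, smul_zero]
    rintro ⟨h1, h2⟩
    rcases not_and_or.mp h with hr | hs
    · exact S.mulIdx_ne p r (fun he => hr he.symm) h1
    · exact S.mulIdx_ne q s (fun he => hs he.symm) h2

end MajoranaSetting

namespace MajoranaSetting
variable (S : MajoranaSetting)

lemma conj_mulSign (p r : S.PIdx) : (starRingEnd ℂ) (S.mulSign p r) = S.mulSign p r := by
  rcases S.mulSign_pm p r with h | h <;> simp [h]

def RepM (N : Matrix S.PIdx S.PIdx ℂ) : S.carrier :=
  ∑ x : S.PIdx × S.PIdx, N x.1 x.2 • S.e x.1 x.2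

def convM (M N : Matrix S.PIdx S.PIdx ℂ) : Matrix S.PIdx S.PIdx ℂ :=
  Matrix.of fun p' q' =>
    ∑ x : S.PIdx × S.PIdx, ∑ y : S.PIdx × S.PIdx,
      (if S.mulIdx x.1 y.1 = p' ∧ S.mulIdx x.2 y.2 = q'
        then S.mulSign x.1 y.1 * S.mulSign x.2 y.2 * (M x.1 x.2 * N y.1 y.2) else 0)

def Even2 (N : Matrix S.PIdx S.PIdx ℂ) : Prop := ∀ p q, S.bit p ≠ S.bit q → N p q = 0

lemma sum_pair_ite (A B : S.PIdx) (f : S.PIdx × S.PIdx → S.carrier) :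
    (∑ z : S.PIdx × S.PIdx, if A = z.1 ∧ B = z.2 then f z else 0) = f (A, B) := by
  have h0 : ∀ z : S.PIdx × S.PIdx,
      (if A = z.1 ∧ B = z.2 then f z else 0) = (if (A, B) = z then f z else 0) := by
    intro z
    refine if_congr ?_ rfl rfl
    constructor
    · rintro ⟨h1, h2⟩; exact Prod.ext h1 h2
    · rintro rfl; exact ⟨rfl, rfl⟩
  rw [Finset.sum_congr rfl (fun z _ => h0 z)]
  rw [Finset.sum_ite_eq Finset.univ (A, B) f, if_pos (Finset.mem_univ _)]

lemma RepM_mul (M N : Matrix S.PIdx S.PIdx ℂ) (hM : S.Even2 M) (hN : S.Even2 N) :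
    S.RepM M * S.RepM N = S.RepM (S.convM M N) := by
  have key : ∀ x y : S.PIdx × S.PIdx,
      (M x.1 x.2 • S.e x.1 x.2) * (N y.1 y.2 • S.e y.1 y.2)
        = (S.mulSign x.1 y.1 * S.mulSign x.2 y.2 * (M x.1 x.2 * N y.1 y.2)) •
            S.e (S.mulIdx x.1 y.1) (S.mulIdx x.2 y.2) := by
    intro x y
    by_cases hz : M x.1 x.2 * N y.1 y.2 = 0
    · rcases mul_eq_zero.mp hz with h | h <;> simp [h, hz]
    · have hMne : M x.1 x.2 ≠ 0 := fun h => hz (by rw [h, zero_mul])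
      have hNne : N y.1 y.2 ≠ 0 := fun h => hz (by rw [h, mul_zero])
      have h1 : S.bit x.1 = S.bit x.2 := by
        by_contra hc; exact hMne (hM _ _ hc)
      have h2 : S.bit y.1 = S.bit y.2 := by
        by_contra hc; exact hNne (hN _ _ hc)
      rw [smul_mul_smul_comm, S.e_mul, S.zphase_even _ _ _ _ h1 h2, one_mul, smul_smul]
      congr 1
      ring
  rw [RepM, RepM, Finset.sum_mul_sum]
  calc ∑ x : S.PIdx × S.PIdx, ∑ y : S.PIdx × S.PIdx,
        (M x.1 x.2 • S.e x.1 x.2) * (N y.1 y.2 • S.e y.1 y.2)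
      = ∑ x : S.PIdx × S.PIdx, ∑ y : S.PIdx × S.PIdx,
          (S.mulSign x.1 y.1 * S.mulSign x.2 y.2 * (M x.1 x.2 * N y.1 y.2)) •
            S.e (S.mulIdx x.1 y.1) (S.mulIdx x.2 y.2) := by
        exact Finset.sum_congr rfl fun x _ => Finset.sum_congr rfl fun y _ => key x y
    _ = ∑ x : S.PIdx × S.PIdx, ∑ y : S.PIdx × S.PIdx, ∑ z : S.PIdx × S.PIdx,
          (if S.mulIdx x.1 y.1 = z.1 ∧ S.mulIdx x.2 y.2 = z.2
            then (S.mulSign x.1 y.1 * S.mulSign x.2 y.2 * (M x.1 x.2 * N y.1 y.2)) •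
              S.e z.1 z.2 else 0) := by
        refine Finset.sum_congr rfl fun x _ => Finset.sum_congr rfl fun y _ => ?_
        rw [S.sum_pair_ite (S.mulIdx x.1 y.1) (S.mulIdx x.2 y.2)
          (fun z => (S.mulSign x.1 y.1 * S.mulSign x.2 y.2 * (M x.1 x.2 * N y.1 y.2)) •
            S.e z.1 z.2)]
    _ = ∑ z : S.PIdx × S.PIdx, ∑ x : S.PIdx × S.PIdx, ∑ y : S.PIdx × S.PIdx,
          (if S.mulIdx x.1 y.1 = z.1 ∧ S.mulIdx x.2 y.2 = z.2
            then (S.mulSign x.1 y.1 * S.mulSign x.2 y.2 * (M x.1 x.2 * N y.1 y.2)) •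
              S.e z.1 z.2 else 0) := by
        exact Eq.trans (Finset.sum_congr rfl fun x _ => Finset.sum_comm) Finset.sum_comm
    _ = S.RepM (S.convM M N) := by
        rw [RepM]
        refine Finset.sum_congr rfl fun z _ => ?_
        rw [convM, Matrix.of_apply, Finset.sum_smul]
        refine Finset.sum_congr rfl fun x _ => ?_
        rw [Finset.sum_smul]
        refine Finset.sum_congr rfl fun y _ => ?_
        rw [ite_smul, zero_smul]

lemma convM_even (M N : Matrix S.PIdx S.PIdx ℂ) (hM : S.Even2 M) (hN : S.Even2 N) :
    S.Even2 (S.convM M N) := by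
  intro p' q' hne
  rw [convM, Matrix.of_apply]
  refine Finset.sum_eq_zero fun x _ => Finset.sum_eq_zero fun y _ => ?_
  by_cases hc : S.mulIdx x.1 y.1 = p' ∧ S.mulIdx x.2 y.2 = q'
  · rw [if_pos hc]
    rcases eq_or_ne (M x.1 x.2) 0 with h | h
    · rw [h]; ring
    rcases eq_or_ne (N y.1 y.2) 0 with h' | h'
    · rw [h']; ring
    exfalso
    have h1 : S.bit x.1 = S.bit x.2 := by
      by_contra hcc; exact h (hM _ _ hcc)
    have h2 : S.bit y.1 = S.bit y.2 := by
      by_contra hcc; exact h' (hN _ _ hcc)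
    apply hne
    rw [← hc.1, ← hc.2, S.bit_mulIdx, S.bit_mulIdx, h1, h2]
  · rw [if_neg hc]

end MajoranaSetting

namespace MajoranaSetting
variable (S : MajoranaSetting)

open Matrix in
lemma star_mulSign' : True := trivial

open Matrix

lemma star_mulSign (p r : S.PIdx) : star (S.mulSign p r) = S.mulSign p r := by
  rcases S.mulSign_pm p r with h | h <;> simp [h]

def gramD {ι₁ ι₂ : Type} [Fintype ι₁] [Fintype ι₂]
    (A : Matrix ι₁ S.PIdx ℂ) (B : Matrix ι₂ S.PIdx ℂ) : Matrix (ι₁ × ι₂) S.PIdx ℂ :=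
  Matrix.of fun ab p' => ∑ z : S.PIdx × S.PIdx,
    (if S.mulIdx z.1 z.2 = p' then S.mulSign z.1 z.2 * (A ab.1 z.1 * B ab.2 z.2) else 0)

set_option maxHeartbeats 1000000 in
lemma convM_gram {ι₁ ι₂ : Type} [Fintype ι₁] [Fintype ι₂]
    (A : Matrix ι₁ S.PIdx ℂ) (B : Matrix ι₂ S.PIdx ℂ) :
    S.convM (Aᴴ * A) (Bᴴ * B) = (S.gramD A B)ᴴ * S.gramD A B := by
  ext p' q'
  rw [Matrix.mul_apply]
  have hstar : ∀ ab : ι₁ × ι₂,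
      (S.gramD A B)ᴴ p' ab = ∑ z : S.PIdx × S.PIdx,
        (if S.mulIdx z.1 z.2 = p'
          then S.mulSign z.1 z.2 * (star (A ab.1 z.1) * star (B ab.2 z.2)) else 0) := by
    intro ab
    rw [Matrix.conjTranspose_apply, gramD, Matrix.of_apply, star_sum]
    refine Finset.sum_congr rfl fun z _ => ?_
    rw [apply_ite (star : ℂ → ℂ), star_zero, star_mul', star_mul', S.star_mulSign]
  -- RHS into canonical triple sum
  have hR : (∑ ab : ι₁ × ι₂, (S.gramD A B)ᴴ p' ab * S.gramD A B ab q')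
      = ∑ z : S.PIdx × S.PIdx, ∑ w : S.PIdx × S.PIdx, ∑ ab : ι₁ × ι₂,
          (if S.mulIdx z.1 z.2 = p'
            then S.mulSign z.1 z.2 * (star (A ab.1 z.1) * star (B ab.2 z.2)) else 0) *
          (if S.mulIdx w.1 w.2 = q'
            then S.mulSign w.1 w.2 * (A ab.1 w.1 * B ab.2 w.2) else 0) := by
    have h1 : ∀ ab : ι₁ × ι₂, (S.gramD A B)ᴴ p' ab * S.gramD A B ab q'
        = ∑ z : S.PIdx × S.PIdx, ∑ w : S.PIdx × S.PIdx,
            (if S.mulIdx z.1 z.2 = p'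
              then S.mulSign z.1 z.2 * (star (A ab.1 z.1) * star (B ab.2 z.2)) else 0) *
            (if S.mulIdx w.1 w.2 = q'
              then S.mulSign w.1 w.2 * (A ab.1 w.1 * B ab.2 w.2) else 0) := by
      intro ab
      rw [hstar ab, show S.gramD A B ab q' = ∑ w : S.PIdx × S.PIdx,
        (if S.mulIdx w.1 w.2 = q'
          then S.mulSign w.1 w.2 * (A ab.1 w.1 * B ab.2 w.2) else 0) from rfl]
      rw [Finset.sum_mul_sum]
    rw [Finset.sum_congr rfl fun ab _ => h1 ab]
    exact Eq.trans Finset.sum_comm (Finset.sum_congr rfl fun z _ => Finset.sum_comm)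
  rw [hR]
  -- LHS into single sum over pairs of pairs, then reindex
  rw [convM, Matrix.of_apply]
  rw [← Fintype.sum_prod_type
    (f := fun u : (S.PIdx × S.PIdx) × (S.PIdx × S.PIdx) =>
      if S.mulIdx u.1.1 u.2.1 = p' ∧ S.mulIdx u.1.2 u.2.2 = q'
        then S.mulSign u.1.1 u.2.1 * S.mulSign u.1.2 u.2.2 *
          ((Aᴴ * A) u.1.1 u.1.2 * ((Bᴴ * B) u.2.1 u.2.2)) else 0)]
  rw [show (∑ z : S.PIdx × S.PIdx, ∑ w : S.PIdx × S.PIdx, ∑ ab : ι₁ × ι₂,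
      (if S.mulIdx z.1 z.2 = p'
        then S.mulSign z.1 z.2 * (star (A ab.1 z.1) * star (B ab.2 z.2)) else 0) *
      (if S.mulIdx w.1 w.2 = q'
        then S.mulSign w.1 w.2 * (A ab.1 w.1 * B ab.2 w.2) else 0))
    = ∑ u : (S.PIdx × S.PIdx) × (S.PIdx × S.PIdx), ∑ ab : ι₁ × ι₂,
      (if S.mulIdx u.1.1 u.1.2 = p'
        then S.mulSign u.1.1 u.1.2 * (star (A ab.1 u.1.1) * star (B ab.2 u.1.2)) else 0) *
      (if S.mulIdx u.2.1 u.2.2 = q'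
        then S.mulSign u.2.1 u.2.2 * (A ab.1 u.2.1 * B ab.2 u.2.2) else 0)
    from (Fintype.sum_prod_type
      (f := fun u : (S.PIdx × S.PIdx) × (S.PIdx × S.PIdx) =>
        ∑ ab : ι₁ × ι₂,
          (if S.mulIdx u.1.1 u.1.2 = p'
            then S.mulSign u.1.1 u.1.2 * (star (A ab.1 u.1.1) * star (B ab.2 u.1.2)) else 0) *
          (if S.mulIdx u.2.1 u.2.2 = q'
            then S.mulSign u.2.1 u.2.2 * (A ab.1 u.2.1 * B ab.2 u.2.2) else 0))).symm]
  apply Fintype.sum_equiv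
    (Equiv.mk
      (fun u : (S.PIdx × S.PIdx) × (S.PIdx × S.PIdx) => ((u.1.1, u.2.1), (u.1.2, u.2.2)))
      (fun u => ((u.1.1, u.2.1), (u.1.2, u.2.2)))
      (by rintro ⟨⟨a, b⟩, ⟨c, d⟩⟩; rfl)
      (by rintro ⟨⟨a, b⟩, ⟨c, d⟩⟩; rfl))
  rintro ⟨⟨z1, z2⟩, ⟨w1, w2⟩⟩
  simp only [Equiv.coe_fn_mk]
  by_cases hz : S.mulIdx z1 w1 = p'
  · by_cases hw : S.mulIdx z2 w2 = q'
    · rw [if_pos ⟨hz, hw⟩]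
      have hterm : ∀ ab : ι₁ × ι₂,
          (if S.mulIdx z1 w1 = p'
            then S.mulSign z1 w1 * (star (A ab.1 z1) * star (B ab.2 w1)) else 0) *
          (if S.mulIdx z2 w2 = q'
            then S.mulSign z2 w2 * (A ab.1 z2 * B ab.2 w2) else 0)
          = (S.mulSign z1 w1 * S.mulSign z2 w2) *
              ((star (A ab.1 z1) * A ab.1 z2) * (star (B ab.2 w1) * B ab.2 w2)) := by
        intro ab
        rw [if_pos hz, if_pos hw]
        ring
      rw [Finset.sum_congr rfl fun ab _ => hterm ab]
      rw [← Finset.mul_sum]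
      rw [Fintype.sum_prod_type]
      have hfact : (∑ a : ι₁, ∑ b : ι₂,
          (star (A a z1) * A a z2) * (star (B b w1) * B b w2))
          = (∑ a : ι₁, star (A a z1) * A a z2) * (∑ b : ι₂, star (B b w1) * B b w2) := by
        rw [Finset.sum_mul_sum]
      rw [hfact]
      rw [Matrix.mul_apply, Matrix.mul_apply]
      simp only [Matrix.conjTranspose_apply]
    · rw [if_neg (fun hc => hw hc.2)]
      exact (Finset.sum_eq_zero fun ab _ => by rw [if_neg hw, mul_zero]).symm
  · rw [if_neg (fun hc => hz hc.1)]
    exact (Finset.sum_eq_zero fun ab _ => by rw [if_neg hz, zero_mul]).symm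

end MajoranaSetting

namespace MajoranaSetting
variable (S : MajoranaSetting)
open Matrix

def GoodMat (N : Matrix S.PIdx S.PIdx ℂ) : Prop :=
  S.Even2 N ∧ ∃ (ι : Type) (_ : Fintype ι) (B : Matrix ι S.PIdx ℂ), N = Bᴴ * B

lemma GoodMat.posSemidef {N : Matrix S.PIdx S.PIdx ℂ} (h : S.GoodMat N) : N.PosSemidef := by
  obtain ⟨-, ι, hι, B, rfl⟩ := h
  exact Matrix.posSemidef_conjTranspose_mul_self B

lemma GoodMat.conv {M N : Matrix S.PIdx S.PIdx ℂ} (hM : S.GoodMat M) (hN : S.GoodMat N) :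
    S.GoodMat (S.convM M N) := by
  obtain ⟨hMe, ι₁, hι₁, A, rfl⟩ := hM
  obtain ⟨hNe, ι₂, hι₂, B, rfl⟩ := hN
  exact ⟨S.convM_even _ _ hMe hNe, (ι₁ × ι₂), inferInstance, S.gramD A B, S.convM_gram A B⟩

lemma GoodMat.repMul {M N : Matrix S.PIdx S.PIdx ℂ} (hM : S.GoodMat M) (hN : S.GoodMat N) :
    S.RepM M * S.RepM N = S.RepM (S.convM M N) :=
  S.RepM_mul M N hM.1 hN.1

def Pnil : Matrix S.PIdx S.PIdx ℂ :=
  Matrix.of fun p q => if p = S.nilIdx ∧ q = S.nilIdx then (1 : ℂ) else 0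

lemma bit_nil : S.bit S.nilIdx = 0 := rfl

lemma one_eq_e : (1 : S.carrier) = S.e S.nilIdx S.nilIdx := by
  have hts := S.twist_spec 1 1 1 1 0 0 0 0 (by norm_num) (by norm_num) (by norm_num)
    (by norm_num) (one_mem _) (one_mem _) (one_mem _) (one_mem _)
    (by simp) (by simp) (by simp) (by simp)
  simp only [mul_one, one_mul] at hts
  have he : S.e S.nilIdx S.nilIdx = S.twist (S.Θ 1) 1 := rfl
  rw [he, S.theta_one, hts]
  simp

lemma Pnil_good : S.GoodMat S.Pnil := by
  constructor
  · intro p q h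
    rw [Pnil, Matrix.of_apply, if_neg]
    rintro ⟨rfl, rfl⟩
    exact h rfl
  · refine ⟨Unit, inferInstance, Matrix.of (fun _ p => if p = S.nilIdx then 1 else 0), ?_⟩
    ext p q
    rw [Pnil, Matrix.of_apply, Matrix.mul_apply]
    rw [Finset.univ_unique, Finset.sum_singleton]
    rw [Matrix.conjTranspose_apply, Matrix.of_apply, Matrix.of_apply]
    by_cases hp : p = S.nilIdx <;> by_cases hq : q = S.nilIdx <;>
      simp [hp, hq]

lemma RepM_Pnil : S.RepM S.Pnil = 1 := by
  rw [RepM]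
  have hterm : ∀ x : S.PIdx × S.PIdx, S.Pnil x.1 x.2 • S.e x.1 x.2
      = (if (S.nilIdx, S.nilIdx) = x then S.e x.1 x.2 else 0) := by
    intro x
    rw [Pnil, Matrix.of_apply]
    by_cases h : x.1 = S.nilIdx ∧ x.2 = S.nilIdx
    · rw [if_pos h, one_smul, if_pos (Prod.ext h.1.symm h.2.symm)]
    · rw [if_neg h, zero_smul, if_neg (fun hc => h ⟨(Prod.ext_iff.mp hc).1.symm,
        (Prod.ext_iff.mp hc).2.symm⟩)]
  rw [Finset.sum_congr rfl fun x _ => hterm x]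
  rw [Finset.sum_ite_eq Finset.univ (S.nilIdx, S.nilIdx) (fun x => S.e x.1 x.2)]
  rw [if_pos (Finset.mem_univ _)]
  exact S.one_eq_e.symm

end MajoranaSetting

namespace MajoranaSetting
variable (S : MajoranaSetting)
open Matrix

lemma gauge_e (p q : S.PIdx) :
    S.gauge (S.e p q) = ((-1 : ℂ) ^ (S.bit p + S.bit q)) • S.e p q := by
  rw [S.e_eq, _root_.map_smul, _root_.map_mul, S.gauge_theta_C, S.gauge_C_p]
  rw [smul_mul_smul_comm, ← pow_add, smul_smul, smul_smul]
  congr 1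
  ring

lemma RepM_add (M N : Matrix S.PIdx S.PIdx ℂ) :
    S.RepM (M + N) = S.RepM M + S.RepM N := by
  rw [RepM, RepM, RepM, ← Finset.sum_add_distrib]
  exact Finset.sum_congr rfl fun x _ => by rw [Matrix.add_apply, add_smul]

lemma RepM_smul (c : ℂ) (M : Matrix S.PIdx S.PIdx ℂ) :
    S.RepM (c • M) = c • S.RepM M := by
  rw [RepM, RepM, Finset.smul_sum]
  exact Finset.sum_congr rfl fun x _ => by rw [Matrix.smul_apply, smul_eq_mul, mul_smul]

lemma gauge_RepM (M : Matrix S.PIdx S.PIdx ℂ) :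
    S.gauge (S.RepM M) = S.RepM (Matrix.of fun p q => ((-1 : ℂ) ^ (S.bit p + S.bit q)) * M p q) := by
  rw [RepM, RepM, map_sum]
  refine Finset.sum_congr rfl fun x _ => ?_
  rw [_root_.map_smul, S.gauge_e, smul_smul, Matrix.of_apply]
  congr 1
  ring

lemma RepM_Jmat (Jc : List S.Λ → List S.Λ → ℂ) :
    S.RepM (S.Jmat Jc) = -(S.Ham Jc) := by
  rw [Ham, neg_neg, RepM, Fintype.sum_prod_type]
  rw [← Finset.sum_coe_sort S.P]
  refine Finset.sum_congr rfl fun p _ => ?_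
  rw [← Finset.sum_coe_sort S.P]
  exact Finset.sum_congr rfl fun q _ => rfl

def NJ (Jc : List S.Λ → List S.Λ → ℂ) : Matrix S.PIdx S.PIdx ℂ :=
  Matrix.of fun p q => if S.bit p = S.bit q then Jc p.1 q.1 else 0

def Dg : Matrix S.PIdx S.PIdx ℂ := Matrix.diagonal (fun p => (-1 : ℂ) ^ (S.bit p))

lemma DgJDg_apply (Jc : List S.Λ → List S.Λ → ℂ) (p q : S.PIdx) :
    (S.Dg * S.Jmat Jc * S.Dg) p q = ((-1 : ℂ) ^ (S.bit p + S.bit q)) * Jc p.1 q.1 := by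
  simp only [Dg]
  rw [Matrix.mul_diagonal, Matrix.diagonal_mul, pow_add]
  show (-1 : ℂ) ^ S.bit p * Jc p.1 q.1 * (-1 : ℂ) ^ S.bit q = _
  ring

lemma NJ_eq (Jc : List S.Λ → List S.Λ → ℂ) :
    S.NJ Jc = (2⁻¹ : ℂ) • (S.Jmat Jc + S.Dg * S.Jmat Jc * S.Dg) := by
  ext p q
  rw [NJ, Matrix.of_apply, Matrix.smul_apply, Matrix.add_apply, S.DgJDg_apply, smul_eq_mul]
  have hJpq : S.Jmat Jc p q = Jc p.1 q.1 := rfl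
  rw [hJpq]
  by_cases h : S.bit p = S.bit q
  · rw [if_pos h, h]
    have h2 : ((-1 : ℂ)) ^ (S.bit q + S.bit q) = 1 := Even.neg_one_pow ⟨S.bit q, rfl⟩
    rw [h2]
    ring
  · rw [if_neg h]
    have h2 : ((-1 : ℂ)) ^ (S.bit p + S.bit q) = -1 := by
      apply Odd.neg_one_pow
      rcases S.bit_eq_zero_or_one p with h1 | h1 <;> rcases S.bit_eq_zero_or_one q with h3 | h3 <;>
        first
          | (exfalso; rw [h1, h3] at h; exact h rfl)
          | (rw [h1, h3]; decide)
    rw [h2]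
    ring

lemma posSemidef_half {n : Type} [Fintype n] (M : Matrix n n ℂ) (h : M.PosSemidef) :
    ((2⁻¹ : ℂ) • M).PosSemidef := by
  rw [Matrix.posSemidef_iff_dotProduct_mulVec] at h ⊢
  constructor
  · have h1 := h.1
    unfold Matrix.IsHermitian at h1 ⊢
    rw [Matrix.conjTranspose_smul, h1]
    congr 1
    simp
  · intro v
    have h2 := h.2 v
    rw [Matrix.smul_mulVec, dotProduct_smul, smul_eq_mul]
    have hpos : (0 : ℂ) ≤ 2⁻¹ := by
      rw [show (2⁻¹ : ℂ) = ((2⁻¹ : ℝ) : ℂ) by norm_num]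
      exact Complex.zero_le_real.mpr (by norm_num)
    exact mul_nonneg hpos h2

lemma NJ_posSemidef (Jc : List S.Λ → List S.Λ → ℂ) (hpsd : (S.Jmat Jc).PosSemidef) :
    (S.NJ Jc).PosSemidef := by
  rw [S.NJ_eq]
  apply posSemidef_half
  apply hpsd.add
  have hD : (S.Dg)ᴴ = S.Dg := by
    ext p q
    rw [Matrix.conjTranspose_apply]
    simp only [Dg, Matrix.diagonal_apply]
    by_cases h : p = q
    · subst h
      simp
    · rw [if_neg (fun hh => h hh.symm), if_neg h, star_zero]
  have := hpsd.mul_mul_conjTranspose_same S.Dg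
  rwa [hD] at this

lemma NJ_good (Jc : List S.Λ → List S.Λ → ℂ) (hpsd : (S.Jmat Jc).PosSemidef) :
    S.GoodMat (S.NJ Jc) := by
  constructor
  · intro p q h
    rw [NJ, Matrix.of_apply, if_neg h]
  · open scoped MatrixOrder Matrix.Norms.L2Operator in
    obtain ⟨B, hB⟩ := CStarAlgebra.nonneg_iff_eq_star_mul_self.mp (S.NJ_posSemidef Jc hpsd).nonneg
    exact ⟨S.PIdx, inferInstance, B, by rw [hB, Matrix.star_eq_conjTranspose]⟩

lemma RepM_NJ (Jc : List S.Λ → List S.Λ → ℂ) (hGI : S.gauge (S.Ham Jc) = S.Ham Jc) :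
    S.RepM (S.NJ Jc) = -(S.Ham Jc) := by
  have hJ : S.RepM (S.Jmat Jc) = -(S.Ham Jc) := S.RepM_Jmat Jc
  have hDgJ : S.Dg * S.Jmat Jc * S.Dg
      = Matrix.of fun p q => ((-1 : ℂ) ^ (S.bit p + S.bit q)) * (S.Jmat Jc) p q := by
    ext p q
    rw [S.DgJDg_apply, Matrix.of_apply]
    rfl
  have htw : S.RepM (S.Dg * S.Jmat Jc * S.Dg) = -(S.Ham Jc) := by
    rw [hDgJ, ← S.gauge_RepM, hJ, map_neg, hGI]
  rw [S.NJ_eq, S.RepM_smul, S.RepM_add, hJ, htw]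
  rw [← two_smul ℂ, smul_smul]
  norm_num

end MajoranaSetting

namespace MajoranaSetting
variable (S : MajoranaSetting)
open Matrix

lemma theta_zero : S.Θ 0 = 0 := by
  have h := S.Θ_smul 0 0
  simpa using h

lemma theta_sum {α : Type*} (s : Finset α) (f : α → S.carrier) :
    S.Θ (∑ i ∈ s, f i) = ∑ i ∈ s, S.Θ (f i) := by
  classical
  induction s using Finset.cons_induction with
  | empty => simpa using S.theta_zero
  | cons a s ha ih => rw [Finset.sum_cons, S.Θ_add, ih, Finset.sum_cons]

lemma twist_zero_left (y : S.carrier) : S.twist 0 y = 0 := by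
  have h := S.twist_smul_left 0 0 y
  simpa using h

lemma twist_zero_right (x : S.carrier) : S.twist x 0 = 0 := by
  have h := S.twist_smul_right 0 x 0
  simpa using h

lemma twist_sum_left {α : Type*} (s : Finset α) (f : α → S.carrier) (y : S.carrier) :
    S.twist (∑ i ∈ s, f i) y = ∑ i ∈ s, S.twist (f i) y := by
  classical
  induction s using Finset.cons_induction with
  | empty => simpa using S.twist_zero_left y
  | cons a s ha ih => rw [Finset.sum_cons, S.twist_add_left, ih, Finset.sum_cons]

lemma twist_sum_right {α : Type*} (s : Finset α) (f : α → S.carrier) (x : S.carrier) :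
    S.twist x (∑ i ∈ s, f i) = ∑ i ∈ s, S.twist x (f i) := by
  classical
  induction s using Finset.cons_induction with
  | empty => simpa using S.twist_zero_right x
  | cons a s ha ih => rw [Finset.sum_cons, S.twist_add_right, ih, Finset.sum_cons]

lemma G_expand (a : List S.Λ → ℂ) (A : S.carrier) (hA : A = ∑ J ∈ S.P, a J • S.C J) :
    S.twist (S.Θ A) A = ∑ x : S.PIdx × S.PIdx,
      ((starRingEnd ℂ) (a x.1.1) * a x.2.1) • S.e x.1 x.2 := by
  have hA' : A = ∑ p : S.PIdx, a p.1 • S.C p.1 := by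
    rw [hA, Finset.sum_coe_sort S.P (fun J => a J • S.C J)]
  rw [hA', S.theta_sum, S.twist_sum_left, Fintype.sum_prod_type]
  refine Finset.sum_congr rfl fun p _ => ?_
  rw [S.twist_sum_right]
  refine Finset.sum_congr rfl fun q _ => ?_
  rw [S.Θ_smul, S.twist_smul_left, S.twist_smul_right, smul_smul]
  rfl

lemma Tr_G_RepM (a : List S.Λ → ℂ) (A : S.carrier) (hA : A = ∑ J ∈ S.P, a J • S.C J)
    (N : Matrix S.PIdx S.PIdx ℂ) :
    S.Tr (S.twist (S.Θ A) A * S.RepM N)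
      = star (fun p : S.PIdx => S.mulSign p p * a p.1) ⬝ᵥ
          (N *ᵥ (fun p : S.PIdx => S.mulSign p p * a p.1)) := by
  rw [S.G_expand a A hA, RepM, Finset.sum_mul_sum, map_sum]
  have hterm : ∀ x y : S.PIdx × S.PIdx,
      S.Tr ((((starRingEnd ℂ) (a x.1.1) * a x.2.1) • S.e x.1 x.2) * (N y.1 y.2 • S.e y.1 y.2))
        = (if x = y then ((starRingEnd ℂ) (a x.1.1) * a x.2.1) * N x.1 x.2 *
            (S.mulSign x.1 x.1 * S.mulSign x.2 x.2) else 0) := by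
    intro x y
    rw [smul_mul_smul_comm, _root_.map_smul, S.Tr_e_mul, smul_eq_mul]
    by_cases h : y.1 = x.1 ∧ y.2 = x.2
    · rw [if_pos h, if_pos (Prod.ext h.1.symm h.2.symm)]
      rw [h.1, h.2]
    · rw [if_neg h, mul_zero, if_neg
        (fun hc => h ⟨(congrArg Prod.fst hc).symm, (congrArg Prod.snd hc).symm⟩)]
  calc (∑ x : S.PIdx × S.PIdx, S.Tr (∑ y : S.PIdx × S.PIdx,
        (((starRingEnd ℂ) (a x.1.1) * a x.2.1) • S.e x.1 x.2) * (N y.1 y.2 • S.e y.1 y.2)))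
      = ∑ x : S.PIdx × S.PIdx, ((starRingEnd ℂ) (a x.1.1) * a x.2.1) * N x.1 x.2 *
          (S.mulSign x.1 x.1 * S.mulSign x.2 x.2) := by
        refine Finset.sum_congr rfl fun x _ => ?_
        rw [map_sum, Finset.sum_congr rfl fun y _ => hterm x y]
        rw [Finset.sum_ite_eq Finset.univ x
          (fun _ => ((starRingEnd ℂ) (a x.1.1) * a x.2.1) * N x.1 x.2 *
            (S.mulSign x.1 x.1 * S.mulSign x.2 x.2))]
        rw [if_pos (Finset.mem_univ _)]
    _ = _ := by
        apply Eq.symm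
        simp only [dotProduct, Matrix.mulVec, Pi.star_apply]
        simp only [Finset.mul_sum]
        rw [← Fintype.sum_prod_type (f := fun x : S.PIdx × S.PIdx =>
          star (S.mulSign x.1 x.1 * a x.1.1) * (N x.1 x.2 * (S.mulSign x.2 x.2 * a x.2.1)))]
        refine Finset.sum_congr rfl fun x _ => ?_
        rw [star_mul', S.star_mulSign, Complex.star_def]
        ring

lemma Pnil_quad (w : S.PIdx → ℂ) :
    star w ⬝ᵥ (S.Pnil *ᵥ w) = star (w S.nilIdx) * w S.nilIdx := by
  simp only [dotProduct, Matrix.mulVec, Pi.star_apply, Pnil, Matrix.of_apply]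
  have hin : ∀ p : S.PIdx,
      (∑ q : S.PIdx, (if p = S.nilIdx ∧ q = S.nilIdx then (1 : ℂ) else 0) * w q)
        = if p = S.nilIdx then w S.nilIdx else 0 := by
    intro p
    by_cases hp : p = S.nilIdx
    · rw [if_pos hp]
      rw [Finset.sum_congr rfl fun q _ => by
        rw [if_congr (and_iff_right hp) rfl rfl, ite_mul, one_mul, zero_mul]]
      rw [Finset.sum_ite_eq' Finset.univ S.nilIdx w, if_pos (Finset.mem_univ _)]
    · rw [if_neg hp]
      exact Finset.sum_eq_zero fun q _ => by rw [if_neg (fun hc => hp hc.1), zero_mul]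
  rw [Finset.sum_congr rfl fun p _ => by rw [hin p]]
  simp only [mul_ite, mul_zero]
  rw [Finset.sum_ite_eq' Finset.univ S.nilIdx (fun p => star (w p) * w S.nilIdx)]
  rw [if_pos (Finset.mem_univ _)]

lemma finDim : FiniteDimensional ℂ S.carrier := by
  have hspan : Submodule.span ℂ (Set.range fun p : S.PIdx × S.PIdx =>
      S.twist (S.Θ ((p.1.1.map S.c).prod)) ((p.2.1.map S.c).prod)) = ⊤ := by
    rw [eq_top_iff]
    intro x _
    exact S.basis_span x
  exact ⟨⟨(Set.finite_range _).toFinset, by rw [Set.Finite.coe_toFinset]; exact hspan⟩⟩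

end MajoranaSetting


/-- under the hypotheses of Part I (reflection invariance, global
gauge invariance, `J` positive semidefinite), for `A = ∑_{𝔍∈𝒫₊} a_𝔍 C_𝔍 ∈ 𝔄₊`
one has `Tr((Θ(A)∘A) e^{-H}) ≥ |a_∅|²`. -/
theorem lower_bound_identity_coeff (S : MajoranaSetting)
    (Jc : List S.Λ → List S.Λ → ℂ)
    (hRI : S.Θ (S.Ham Jc) = S.Ham Jc)
    (hGI : S.gauge (S.Ham Jc) = S.Ham Jc)
    (hpsd : (S.Jmat Jc).PosSemidef)
    (a : List S.Λ → ℂ) (A : S.carrier)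
    (hA : A = ∑ J ∈ S.P, a J • S.C J) :
    ((‖a []‖) ^ 2 : ℂ)
      ≤ S.Tr (S.twist (S.Θ A) A * S.expm (-(S.Ham Jc))) := by
  classical
  haveI : FiniteDimensional ℂ S.carrier := S.finDim
  -- coefficient matrices of the powers of -H
  let Nm : ℕ → Matrix S.PIdx S.PIdx ℂ := fun n =>
    Nat.rec S.Pnil (fun _ M => S.convM M (S.NJ Jc)) n
  have hNm : ∀ n, S.GoodMat (Nm n) ∧ (-(S.Ham Jc)) ^ n = S.RepM (Nm n) := by
    intro n
    induction n with
    | zero =>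
        refine ⟨S.Pnil_good, ?_⟩
        rw [pow_zero]
        show (1 : S.carrier) = S.RepM S.Pnil
        exact S.RepM_Pnil.symm
    | succ n ih =>
        refine ⟨MajoranaSetting.GoodMat.conv S ih.1 (S.NJ_good Jc hpsd), ?_⟩
        have hrep := MajoranaSetting.GoodMat.repMul S ih.1 (S.NJ_good Jc hpsd)
        rw [pow_succ, ih.2, ← S.RepM_NJ Jc hGI, hrep]
  -- continuous linear functional
  let Gml : S.carrier →ₗ[ℂ] ℂ := S.Tr.comp (LinearMap.mulLeft ℂ (S.twist (S.Θ A) A))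
  let f : S.carrier →L[ℂ] ℂ := ⟨Gml, Gml.continuous_of_finiteDimensional⟩
  have hf : ∀ x, f x = S.Tr (S.twist (S.Θ A) A * x) := fun x => rfl
  have hsum := NormedSpace.expSeries_summable' (𝕂 := ℂ) (-(S.Ham Jc))
  have hexp : S.expm (-(S.Ham Jc)) = ∑' n : ℕ, ((n.factorial : ℂ))⁻¹ • (-(S.Ham Jc)) ^ n := by
    rw [show S.expm (-(S.Ham Jc)) = NormedSpace.exp (-(S.Ham Jc)) from rfl,
      NormedSpace.exp_eq_tsum ℂ]
  have hmain : S.Tr (S.twist (S.Θ A) A * S.expm (-(S.Ham Jc)))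
      = ∑' n : ℕ, f (((n.factorial : ℂ))⁻¹ • (-(S.Ham Jc)) ^ n) := by
    rw [← hf, hexp, f.map_tsum hsum]
  have hgsum : Summable fun n : ℕ => f (((n.factorial : ℂ))⁻¹ • (-(S.Ham Jc)) ^ n) :=
    Summable.congr (hsum.map f f.continuous) (fun n => rfl)
  have hval : ∀ n : ℕ, f (((n.factorial : ℂ))⁻¹ • (-(S.Ham Jc)) ^ n)
      = ((n.factorial : ℂ))⁻¹ *
          (dotProduct (star (fun p : S.PIdx => S.mulSign p p * a p.1))
            (Matrix.mulVec (Nm n) (fun p : S.PIdx => S.mulSign p p * a p.1))) := by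
    intro n
    rw [_root_.map_smul, smul_eq_mul]
    congr 1
    rw [hf, (hNm n).2, S.Tr_G_RepM a A hA (Nm n)]
  have hfac : ∀ n : ℕ, (0 : ℂ) ≤ ((n.factorial : ℂ))⁻¹ := fun n => by
    rw [show ((n.factorial : ℂ)) = ((n.factorial : ℝ) : ℂ) by push_cast; ring,
      ← Complex.ofReal_inv]
    exact Complex.zero_le_real.mpr (by positivity)
  have hnn : ∀ n : ℕ, 0 ≤ f (((n.factorial : ℂ))⁻¹ • (-(S.Ham Jc)) ^ n) := by
    intro n
    rw [hval n]
    exact mul_nonneg (hfac n) (((hNm n).1.posSemidef).dotProduct_mulVec_nonneg _)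
  have h0 : f (((Nat.factorial 0 : ℂ))⁻¹ • (-(S.Ham Jc)) ^ 0)
      = ((‖a []‖) ^ 2 : ℂ) := by
    rw [hval 0]
    have hN0 : Nm 0 = S.Pnil := rfl
    rw [hN0, S.Pnil_quad]
    have hnil : (S.nilIdx.1 : List S.Λ) = [] := rfl
    rw [Nat.factorial_zero, Nat.cast_one, inv_one, one_mul]
    rw [star_mul', S.star_mulSign, Complex.star_def, hnil]
    have hss : S.mulSign S.nilIdx S.nilIdx * S.mulSign S.nilIdx S.nilIdx = 1 := by
      rcases S.mulSign_pm S.nilIdx S.nilIdx with h | h <;> rw [h] <;> norm_num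
    have habs : ((‖a []‖) ^ 2 : ℂ) = (starRingEnd ℂ) (a []) * a [] := by
      rw [← Complex.ofReal_pow, Complex.sq_norm, Complex.normSq_eq_conj_mul_self]
    rw [habs]
    linear_combination ((starRingEnd ℂ) (a []) * a []) * hss
  rw [hmain]
  have hle := Summable.le_tsum hgsum 0 (fun j _ => hnn j)
  rw [h0] at hle
  exact hle
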